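/- Define L_low = (1/2)(1 + 1/(K−1)) ∑_{k=1}^K P(x_query = v_k and |V_k| = 0), where |V_k| is the number of the N i.i.d. input tokens equal to v_k and x_query is independently sampled from the same distribution. Then for any parameter θ, the population loss L(θ) = (1/2)∑_k E[1{x_query = v_k}(∑_{m≠k} Attn_m² + (1 − Attn_k)²)] satisfies L(θ) ≥ L_low. -/

import Mathlib

open Finset MeasureTheory

/-- The population loss is bounded below by the unavoidable error `L_low` coming from
prompts in which the query feature is absent from the input tokens. -/
theorem population_loss_lower_bound {Ω : Type*} [MeasurableSpace Ω]
    (μ : Measure Ω) [IsProbabilityMeasure μ] {K : ℕ} (hK : 2 ≤ K)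
    (xq : Ω → Fin K) (hxq : Measurable xq)
    (Vzero : Fin K → Set Ω) (hV : ∀ k, MeasurableSet (Vzero k))
    (Attn : Fin K → Ω → ℝ)
    (hnn : ∀ ω m, 0 ≤ Attn m ω) (hsum : ∀ ω, ∑ m, Attn m ω = 1)
    (hzero : ∀ k ω, ω ∈ Vzero k → Attn k ω = 0)
    (hInt : ∀ k : Fin K, Integrable (fun ω =>
      Set.indicator {ω' | xq ω' = k}
        (fun ω' => (∑ m ∈ Finset.univ.erase k, (Attn m ω') ^ 2)
          + (1 - Attn k ω') ^ 2) ω) μ) :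
    (1 / 2) * ∑ k : Fin K, ∫ ω,
        Set.indicator {ω' | xq ω' = k}
          (fun ω' => (∑ m ∈ Finset.univ.erase k, (Attn m ω') ^ 2)
            + (1 - Attn k ω') ^ 2) ω ∂μ
      ≥ (1 / 2) * (1 + 1 / ((K : ℝ) - 1)) *
          ∑ k : Fin K, (μ ({ω | xq ω = k} ∩ Vzero k)).toReal := by
  set c : ℝ := 1 + 1 / ((K : ℝ) - 1) with hc
  have hK1 : (0 : ℝ) < (K : ℝ) - 1 := by
    have : (2 : ℝ) ≤ K := by exact_mod_cast hK
    linarith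
  have hcpos : 0 < c := by
    rw [hc]
    have : 0 < 1 / ((K : ℝ) - 1) := by positivity
    linarith
  rw [mul_assoc]
  apply mul_le_mul_of_nonneg_left _ (by norm_num : (0:ℝ) ≤ 1/2)
  rw [Finset.mul_sum]
  have key : ∀ k : Fin K,
      c * (μ ({ω | xq ω = k} ∩ Vzero k)).toReal ≤
      ∫ ω, Set.indicator {ω' | xq ω' = k}
          (fun ω' => (∑ m ∈ Finset.univ.erase k, (Attn m ω') ^ 2)
            + (1 - Attn k ω') ^ 2) ω ∂μ := by
    intro k
    set A : Set Ω := {ω | xq ω = k} ∩ Vzero k with hA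
    have hAmeas : MeasurableSet A :=
      (hxq (MeasurableSet.singleton k)).inter (hV k)
    have hμA : μ A ≠ ⊤ := measure_ne_top μ A
    have h1 : c * (μ A).toReal = ∫ ω, A.indicator (fun _ => c) ω ∂μ := by
      rw [MeasureTheory.integral_indicator_const _ hAmeas]
      simp [mul_comm, Measure.real]
    rw [h1]
    refine MeasureTheory.integral_mono ((integrable_const c).indicator hAmeas) (hInt k) ?_
    intro ω
    by_cases hω : ω ∈ A
    · rw [Set.indicator_of_mem hω, Set.indicator_of_mem (hω.1 : ω ∈ {ω' | xq ω' = k})]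
      obtain ⟨hq, hz⟩ := hω
      have hAk : Attn k ω = 0 := hzero k ω hz
      have hsumrest : ∑ m ∈ Finset.univ.erase k, Attn m ω = 1 := by
        have := hsum ω
        rw [← Finset.add_sum_erase _ _ (Finset.mem_univ k), hAk, zero_add] at this
        exact this
      have hCS : (1 : ℝ) ≤ ((K : ℝ) - 1) * ∑ m ∈ Finset.univ.erase k, (Attn m ω) ^ 2 := by
        have := sq_sum_le_card_mul_sum_sq (s := Finset.univ.erase k)
          (f := fun m => Attn m ω)
        rw [hsumrest] at this
        have hcard : (#(Finset.univ.erase k) : ℝ) = (K : ℝ) - 1 := by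
          rw [Finset.card_erase_of_mem (Finset.mem_univ k)]
          have h1K : 1 ≤ K := by omega
          simp
          push_cast [h1K]
          ring
        rw [hcard] at this
        simpa using this
      have hsq : 1 / ((K : ℝ) - 1) ≤ ∑ m ∈ Finset.univ.erase k, (Attn m ω) ^ 2 := by
        rw [div_le_iff₀ hK1]
        linarith [hCS]
      have h2 : (1 - Attn k ω) ^ 2 = 1 := by rw [hAk]; ring
      rw [hc, h2]
      linarith
    · rw [Set.indicator_of_notMem hω]
      by_cases hq : ω ∈ {ω' | xq ω' = k}
      · rw [Set.indicator_of_mem hq]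
        have h1 : 0 ≤ ∑ m ∈ Finset.univ.erase k, (Attn m ω) ^ 2 :=
          Finset.sum_nonneg fun m _ => sq_nonneg _
        nlinarith [sq_nonneg (1 - Attn k ω)]
      · rw [Set.indicator_of_notMem hq]
  calc ∑ k : Fin K, c * (μ ({ω | xq ω = k} ∩ Vzero k)).toReal
      ≤ _ := Finset.sum_le_sum fun k _ => key k
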